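/- (One-variable case of Lemma 2.3.) Let I ≥ 1, J ≥ 0, K ≥ 0 be integers with J + K ≥ 1, and let λ ∈ ℂ. Then for all z ∈ ℂ \ {0}, |z^I|^{2λ} / (z^J · z̄^K) = (h(λ)/λ^p) · ∂^{J+K}/∂z^J ∂z̄^K (|z^I|^{2λ}), where p = (1 if J ≠ 0 else 0) + (1 if K ≠ 0 else 0), and h(λ)^{-1} = [I(λI−1)(λI−2)⋯(λI−J+1)] · [I(λI−1)(λI−2)⋯(λI−K+1)] (each bracket taken to be 1 when the corresponding exponent J or K is 0), provided λ is such that h(λ)^{-1} ≠ 0. -/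

import Mathlib

open MeasureTheory Complex Filter

/-- The Wirtinger derivative ∂/∂z = (∂/∂x − i∂/∂y)/2. -/
noncomputable def wdz (f : ℂ → ℂ) (z : ℂ) : ℂ :=
  (fderiv ℝ f z 1 - Complex.I * fderiv ℝ f z Complex.I) / 2

/-- The conjugate Wirtinger derivative ∂/∂z̄ = (∂/∂x + i∂/∂y)/2. -/
noncomputable def wdzbar (f : ℂ → ℂ) (z : ℂ) : ℂ :=
  (fderiv ℝ f z 1 + Complex.I * fderiv ℝ f z Complex.I) / 2

noncomputable def G (μ : ℂ) (a b : ℤ) (w : ℂ) : ℂ :=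
  Complex.exp (μ * Real.log (Complex.normSq w)) * w ^ a * (starRingEnd ℂ w) ^ b

lemma hasFDerivAt_aux (μ : ℂ) (a b : ℤ) {w : ℂ} (hw : w ≠ 0) :
    ∃ D : ℂ →L[ℝ] ℂ, HasFDerivAt (G μ a b) D w ∧
      ∀ v, D v = G μ a b w * ((μ + a) * v / w + (μ + b) * (starRingEnd ℂ v) / starRingEnd ℂ w) := by
  have hn0 : Complex.normSq w ≠ 0 := by simpa using hw
  have hn : HasFDerivAt (fun w : ℂ => Complex.normSq w) _ w :=
    ((Complex.reCLM.hasFDerivAt (x := w)).mul (Complex.reCLM.hasFDerivAt)).add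
      ((Complex.imCLM.hasFDerivAt (x := w)).mul (Complex.imCLM.hasFDerivAt))
  have hlog := (Real.hasDerivAt_log hn0).comp_hasFDerivAt w hn
  have hlogC := Complex.ofRealCLM.hasFDerivAt.comp w hlog
  have hmul := hlogC.const_mul μ
  have hexp := (Complex.hasDerivAt_exp _).comp_hasFDerivAt w hmul
  have hzpow := ((hasDerivAt_zpow a w (Or.inl hw)).hasFDerivAt).restrictScalars ℝ
  have hconjw : starRingEnd ℂ w ≠ 0 := by simpa using hw
  have hconj := (((hasDerivAt_zpow b (starRingEnd ℂ w) (Or.inl hconjw)).hasFDerivAt).restrictScalars ℝ).comp w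
      (Complex.conjCLE.toContinuousLinearMap.hasFDerivAt)
  have hG := (hexp.mul hzpow).mul hconj
  refine ⟨_, hG, fun v => ?_⟩
  simp only [ContinuousLinearMap.add_apply, ContinuousLinearMap.coe_smul',
    ContinuousLinearMap.coe_comp', Function.comp_apply, Pi.smul_apply,
    ContinuousLinearMap.coe_restrictScalars', ContinuousLinearMap.smulRight_apply,
    ContinuousLinearMap.one_apply, Complex.ofRealCLM_apply, Complex.reCLM_apply,
    Complex.imCLM_apply, Complex.conjCLE_apply, ContinuousLinearEquiv.coe_coe,
    smul_eq_mul, Complex.real_smul, ContinuousLinearMap.toSpanSingleton_apply, Pi.mul_apply]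
  have hkey : ((w.re * v.re + w.re * v.re + (w.im * v.im + w.im * v.im) : ℝ) : ℂ)
      = starRingEnd ℂ w * v + starRingEnd ℂ v * w := by
    apply Complex.ext <;> simp [Complex.mul_re, Complex.mul_im] <;> ring
  rw [Complex.ofReal_mul, Complex.ofReal_inv, hkey,
    show ((Complex.normSq w : ℂ))⁻¹ = (w * starRingEnd ℂ w)⁻¹ from by rw [Complex.mul_conj],
    G, zpow_sub_one₀ hw, zpow_sub_one₀ hconjw]
  have hwc : w * starRingEnd ℂ w ≠ 0 := mul_ne_zero hw hconjw
  field_simp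
  ring

lemma wdz_G (μ : ℂ) (a b : ℤ) {w : ℂ} (hw : w ≠ 0) :
    wdz (G μ a b) w = (μ + a) * G μ (a - 1) b w := by
  obtain ⟨D, hD, hDv⟩ := hasFDerivAt_aux μ a b hw
  have hconjw : starRingEnd ℂ w ≠ 0 := by simpa using hw
  rw [wdz, hD.fderiv, hDv, hDv]
  simp only [map_one, Complex.conj_I]
  rw [G, G, zpow_sub_one₀ hw]
  field_simp
  ring_nf
  simp only [Complex.I_sq]
  ring

lemma wdzbar_G (μ : ℂ) (a b : ℤ) {w : ℂ} (hw : w ≠ 0) :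
    wdzbar (G μ a b) w = (μ + b) * G μ a (b - 1) w := by
  obtain ⟨D, hD, hDv⟩ := hasFDerivAt_aux μ a b hw
  have hconjw : starRingEnd ℂ w ≠ 0 := by simpa using hw
  rw [wdzbar, hD.fderiv, hDv, hDv]
  simp only [map_one, Complex.conj_I]
  rw [G, G, zpow_sub_one₀ hconjw]
  field_simp
  ring_nf
  simp only [Complex.I_sq]
  ring

lemma differentiableAt_G (μ : ℂ) (a b : ℤ) {w : ℂ} (hw : w ≠ 0) :
    DifferentiableAt ℝ (G μ a b) w :=
  ((hasFDerivAt_aux μ a b hw).choose_spec.1).differentiableAt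

lemma wdz_congr {f g : ℂ → ℂ} {z : ℂ} (hz : z ≠ 0) (h : ∀ w, w ≠ 0 → f w = g w) :
    wdz f z = wdz g z := by
  have hfg : f =ᶠ[nhds z] g := Filter.eventuallyEq_of_mem (compl_singleton_mem_nhds hz) h
  rw [wdz, wdz, hfg.fderiv_eq]

lemma wdzbar_congr {f g : ℂ → ℂ} {z : ℂ} (hz : z ≠ 0) (h : ∀ w, w ≠ 0 → f w = g w) :
    wdzbar f z = wdzbar g z := by
  have hfg : f =ᶠ[nhds z] g := Filter.eventuallyEq_of_mem (compl_singleton_mem_nhds hz) h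
  rw [wdzbar, wdzbar, hfg.fderiv_eq]

lemma wdz_const_mul {f : ℂ → ℂ} {z : ℂ} (c : ℂ) (hf : DifferentiableAt ℝ f z) :
    wdz (fun w => c * f w) z = c * wdz f z := by
  rw [wdz, wdz, fderiv_const_mul hf c]
  simp only [ContinuousLinearMap.coe_smul', Pi.smul_apply, smul_eq_mul]
  ring

lemma wdzbar_const_mul {f : ℂ → ℂ} {z : ℂ} (c : ℂ) (hf : DifferentiableAt ℝ f z) :
    wdzbar (fun w => c * f w) z = c * wdzbar f z := by
  rw [wdzbar, wdzbar, fderiv_const_mul hf c]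
  simp only [ContinuousLinearMap.coe_smul', Pi.smul_apply, smul_eq_mul]
  ring

lemma iter_wdzbar (μ c : ℂ) (K : ℕ) :
    ∀ w, w ≠ 0 → wdzbar^[K] (fun w => c * G μ 0 0 w) w
      = (c * ∏ j ∈ Finset.range K, (μ - j)) * G μ 0 (-(K : ℤ)) w := by
  induction K with
  | zero => intro w hw; simp
  | succ n ih =>
    intro w hw
    rw [Function.iterate_succ_apply']
    rw [wdzbar_congr hw ih]
    rw [wdzbar_const_mul _ (differentiableAt_G μ 0 (-(n:ℤ)) hw), wdzbar_G μ 0 _ hw,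
      Finset.prod_range_succ,
      show (-(n:ℤ) - 1) = (-((n+1 : ℕ) : ℤ)) from by push_cast; ring]
    push_cast
    ring

lemma iter_wdz (μ c : ℂ) (b : ℤ) (J : ℕ) :
    ∀ w, w ≠ 0 → wdz^[J] (fun w => c * G μ 0 b w) w
      = (c * ∏ j ∈ Finset.range J, (μ - j)) * G μ (-(J : ℤ)) b w := by
  induction J with
  | zero => intro w hw; simp
  | succ n ih =>
    intro w hw
    rw [Function.iterate_succ_apply']
    rw [wdz_congr hw ih]
    rw [wdz_const_mul _ (differentiableAt_G μ (-(n:ℤ)) b hw), wdz_G μ _ b hw,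
      Finset.prod_range_succ,
      show (-(n:ℤ) - 1) = (-((n+1 : ℕ) : ℤ)) from by push_cast; ring]
    push_cast
    ring

lemma wdz_iter_congr (J : ℕ) {f g : ℂ → ℂ} (h : ∀ w, w ≠ 0 → f w = g w) :
    ∀ w, w ≠ 0 → wdz^[J] f w = wdz^[J] g w := by
  induction J with
  | zero => exact h
  | succ n ih =>
    intro w hw
    rw [Function.iterate_succ_apply', Function.iterate_succ_apply']
    exact wdz_congr hw ih

lemma prod_split (μ : ℂ) {J : ℕ} (hJ : J ≠ 0) :
    ∏ j ∈ Finset.range J, (μ - j) = μ * ∏ j ∈ Finset.Icc 1 (J - 1), (μ - j) := by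
  have h1 : Finset.Icc 1 (J - 1) = Finset.Ico 1 J := by ext x; simp; omega
  have h2 : Finset.range J = insert 0 (Finset.Ico 1 J) := by ext x; simp; omega
  rw [h2, Finset.prod_insert (by simp), h1]
  simp


/-- One-variable case of Lemma 2.3. -/
theorem stmt2 (I J K : ℕ) (hI : 1 ≤ I) (hJK : 1 ≤ J + K) (lam : ℂ) (hlam : lam ≠ 0)
    (hinv : ℂ)
    (hdef : hinv =
      (if J = 0 then 1 else (I : ℂ) * ∏ j ∈ Finset.Icc 1 (J - 1), (lam * I - (j : ℂ))) *
      (if K = 0 then 1 else (I : ℂ) * ∏ j ∈ Finset.Icc 1 (K - 1), (lam * I - (j : ℂ))))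
    (hne : hinv ≠ 0) (z : ℂ) (hz : z ≠ 0) :
    Complex.exp (lam * Real.log (‖z ^ I‖ ^ 2)) / (z ^ J * (starRingEnd ℂ z) ^ K)
      = hinv⁻¹ / lam ^ (((if J = 0 then 0 else 1) + (if K = 0 then 0 else 1) : ℕ)) *
        (wdz^[J] (wdzbar^[K]
          (fun w => Complex.exp (lam * Real.log (‖w ^ I‖ ^ 2))))) z := by
  set μ : ℂ := lam * I with hμ
  have habs : ∀ w : ℂ, ‖w ^ I‖ ^ 2 = Complex.normSq w ^ I := by
    intro w
    rw [norm_pow, ← pow_mul, mul_comm, pow_mul, Complex.sq_norm]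
  have hfun : (fun w : ℂ => Complex.exp (lam * Real.log (‖w ^ I‖ ^ 2)))
      = G μ 0 0 := by
    funext w
    rw [habs, Real.log_pow, G]
    simp only [zpow_zero, mul_one]
    push_cast
    ring_nf
    rw [hμ]; ring
  set CK : ℂ := ∏ j ∈ Finset.range K, (μ - j) with hCKdef
  set CJ : ℂ := ∏ j ∈ Finset.range J, (μ - j) with hCJdef
  have hone : (fun w => (1:ℂ) * G μ 0 0 w) = G μ 0 0 := by funext w; rw [one_mul]
  have h1 : ∀ w, w ≠ 0 → wdzbar^[K] (G μ 0 0) w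
      = (fun w => CK * G μ 0 (-(K:ℤ)) w) w := by
    intro w hw
    have := iter_wdzbar μ 1 K w hw
    rw [hone] at this
    simpa using this
  have h2 : wdz^[J] (wdzbar^[K] (G μ 0 0)) z = (CK * CJ) * G μ (-(J:ℤ)) (-(K:ℤ)) z := by
    rw [wdz_iter_congr J h1 z hz, iter_wdz μ CK (-(K:ℤ)) J z hz]
  have hVal : Complex.exp (lam * Real.log (‖z ^ I‖ ^ 2))
        / (z ^ J * (starRingEnd ℂ z) ^ K) = G μ (-(J:ℤ)) (-(K:ℤ)) z := by
    have hzc := congrFun hfun z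
    rw [G, zpow_neg, zpow_neg, zpow_natCast, zpow_natCast, hzc, G]
    simp only [zpow_zero, mul_one]
    rw [div_eq_mul_inv, mul_inv]
    ring
  set pJ : ℕ := (if J = 0 then 0 else 1) with hpJdef
  set pK : ℕ := (if K = 0 then 0 else 1) with hpKdef
  set bJ : ℂ := (if J = 0 then 1 else (I:ℂ) * ∏ j ∈ Finset.Icc 1 (J-1), (lam * I - (j:ℂ))) with hbJdef
  set bK : ℂ := (if K = 0 then 1 else (I:ℂ) * ∏ j ∈ Finset.Icc 1 (K-1), (lam * I - (j:ℂ))) with hbKdef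
  have hCJ : CJ = lam ^ pJ * bJ := by
    rw [hpJdef, hbJdef]
    by_cases hJ : J = 0
    · simp [hCJdef, hJ]
    · simp only [if_neg hJ, pow_one]
      rw [hCJdef, prod_split μ hJ, hμ]
      ring
  have hCK : CK = lam ^ pK * bK := by
    rw [hpKdef, hbKdef]
    by_cases hK : K = 0
    · simp [hCKdef, hK]
    · simp only [if_neg hK, pow_one]
      rw [hCKdef, prod_split μ hK, hμ]
      ring
  have hbJ : bJ ≠ 0 := by rw [hdef] at hne; exact left_ne_zero_of_mul hne
  have hbK : bK ≠ 0 := by rw [hdef] at hne; exact right_ne_zero_of_mul hne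
  have hcoeff : hinv⁻¹ / lam ^ (pJ + pK) * (CK * CJ) = 1 := by
    rw [hCJ, hCK, hdef, pow_add]
    field_simp
  rw [hfun, h2, hVal, ← mul_assoc, hcoeff, one_mul]
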